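/- Let Γ be a linearly ordered abelian group and Γ⁺ its monoid of non-negative elements. The map sending a prime ideal p ⊆ Γ⁺ (allowing the empty ideal, excluding p = Γ⁺) to H_p = Γ \ (p ∪ (−p)) is a bijection between the set of prime ideals of Γ⁺ and the set of convex subgroups of Γ. -/

import Mathlib

/-- A prime ideal of the monoid of non-negative elements (allowing the empty ideal,
excluding the whole monoid). -/
def IsPrimeIdealOfPosCone {Γ : Type*} [AddCommGroup Γ] [LinearOrder Γ] [IsOrderedAddMonoid Γ] (p : Set Γ) : Prop :=
  p ⊆ {γ : Γ | 0 ≤ γ} ∧ p ≠ {γ : Γ | 0 ≤ γ} ∧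
    (∀ γ ∈ p, ∀ δ : Γ, 0 ≤ δ → γ + δ ∈ p) ∧
    (∀ γ δ : Γ, 0 ≤ γ → 0 ≤ δ → γ + δ ∈ p → γ ∈ p ∨ δ ∈ p)

/-- A convex subgroup of a linearly ordered abelian group, as a set. -/
def IsConvexSubgroupSet {Γ : Type*} [AddCommGroup Γ] [LinearOrder Γ] [IsOrderedAddMonoid Γ] (H : Set Γ) : Prop :=
  (0 : Γ) ∈ H ∧ (∀ x ∈ H, ∀ y ∈ H, x + y ∈ H) ∧ (∀ x ∈ H, -x ∈ H) ∧
    (∀ x h : Γ, h ∈ H → 0 ≤ x → x ≤ h → x ∈ H)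

lemma prime_zero_not_mem {Γ : Type*} [AddCommGroup Γ] [LinearOrder Γ] [IsOrderedAddMonoid Γ] {p : Set Γ}
    (hp : IsPrimeIdealOfPosCone p) : (0 : Γ) ∉ p := by
  intro h0
  apply hp.2.1
  refine Set.Subset.antisymm hp.1 ?_
  intro γ hγ
  simpa using hp.2.2.1 0 h0 γ hγ

lemma prime_add_not_mem {Γ : Type*} [AddCommGroup Γ] [LinearOrder Γ] [IsOrderedAddMonoid Γ] {p : Set Γ}
    (hp : IsPrimeIdealOfPosCone p) {a b : Γ}
    (ha : a ∉ p) (hna : -a ∉ p) (hb : b ∉ p) (hnb : -b ∉ p) : a + b ∉ p := by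
  intro hab
  rcases le_or_gt 0 a with h1 | h1
  · rcases le_or_gt 0 b with h2 | h2
    · rcases hp.2.2.2 a b h1 h2 hab with h | h
      exacts [ha h, hb h]
    · refine ha ?_
      have := hp.2.2.1 _ hab (-b) (neg_nonneg.mpr h2.le)
      simpa using this
  · refine hb ?_
    have := hp.2.2.1 _ hab (-a) (neg_nonneg.mpr h1.le)
    have e : a + b + -a = b := by abel
    rwa [e] at this

lemma prime_mem_iff {Γ : Type*} [AddCommGroup Γ] [LinearOrder Γ] [IsOrderedAddMonoid Γ] {p : Set Γ}
    (hp : IsPrimeIdealOfPosCone p) (γ : Γ) :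
    γ ∈ p ↔ 0 < γ ∧ ¬(γ ∉ p ∧ -γ ∉ p) := by
  constructor
  · intro h
    have h0 : 0 ≤ γ := hp.1 h
    have : γ ≠ 0 := by rintro rfl; exact prime_zero_not_mem hp h
    exact ⟨h0.lt_of_ne (Ne.symm this), fun hc => hc.1 h⟩
  · rintro ⟨hpos, hn⟩
    push_neg at hn
    rcases Classical.em (γ ∈ p) with h | h
    · exact h
    · have := hp.1 (hn h)
      simp only [Set.mem_setOf_eq, neg_nonneg] at this
      exact absurd hpos (not_lt.mpr this)

theorem stmt_1 {Γ : Type*} [AddCommGroup Γ] [LinearOrder Γ] [IsOrderedAddMonoid Γ] :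
    Set.BijOn (fun p : Set Γ => {γ : Γ | γ ∉ p ∧ -γ ∉ p})
      {p : Set Γ | IsPrimeIdealOfPosCone p}
      {H : Set Γ | IsConvexSubgroupSet H} := by
  refine ⟨?_, ?_, ?_⟩
  · -- MapsTo
    intro p hp
    simp only [Set.mem_setOf_eq] at hp ⊢
    refine ⟨⟨prime_zero_not_mem hp, by simpa using prime_zero_not_mem hp⟩, ?_, ?_, ?_⟩
    · rintro x ⟨hx1, hx2⟩ y ⟨hy1, hy2⟩
      refine ⟨prime_add_not_mem hp hx1 hx2 hy1 hy2, ?_⟩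
      have : -(x + y) = -x + -y := by abel
      rw [this]
      exact prime_add_not_mem hp hx2 (by simpa using hx1) hy2 (by simpa using hy1)
    · rintro x ⟨hx1, hx2⟩
      exact ⟨hx2, by simpa using hx1⟩
    · rintro x h ⟨hh1, hh2⟩ hx0 hxh
      constructor
      · intro hxp
        refine hh1 ?_
        have := hp.2.2.1 x hxp (h - x) (sub_nonneg.mpr hxh)
        simpa using this
      · intro hxp
        have : 0 ≤ -x := hp.1 hxp
        have hx0' : x = 0 := le_antisymm (by simpa using this) hx0
        rw [hx0'] at hxp
        simp only [neg_zero] at hxp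
        exact prime_zero_not_mem hp hxp
  · -- InjOn
    intro p₁ hp₁ p₂ hp₂ heq
    simp only [Set.mem_setOf_eq] at hp₁ hp₂
    ext γ
    rw [prime_mem_iff hp₁, prime_mem_iff hp₂]
    have heq' : {γ : Γ | γ ∉ p₁ ∧ -γ ∉ p₁} = {γ : Γ | γ ∉ p₂ ∧ -γ ∉ p₂} := heq
    constructor <;> rintro ⟨h1, h2⟩ <;> refine ⟨h1, fun hc => h2 ?_⟩
    · have : γ ∈ {γ : Γ | γ ∉ p₂ ∧ -γ ∉ p₂} := hc
      rw [← heq'] at this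
      exact this
    · have : γ ∈ {γ : Γ | γ ∉ p₁ ∧ -γ ∉ p₁} := hc
      rw [heq'] at this
      exact this
  · -- SurjOn
    intro H hH
    simp only [Set.mem_setOf_eq] at hH
    obtain ⟨h0, hadd, hneg, hconv⟩ := hH
    refine ⟨{γ : Γ | 0 < γ ∧ γ ∉ H}, ?_, ?_⟩
    · simp only [Set.mem_setOf_eq]
      refine ⟨fun γ hγ => hγ.1.le, ?_, ?_, ?_⟩
      · intro hcon
        have : (0 : Γ) ∈ {γ : Γ | 0 < γ ∧ γ ∉ H} := hcon ▸ (by simp : (0:Γ) ∈ {γ : Γ | 0 ≤ γ})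
        exact lt_irrefl 0 this.1
      · rintro γ ⟨hγpos, hγH⟩ δ hδ
        refine ⟨add_pos_of_pos_of_nonneg hγpos hδ, fun hmem => hγH ?_⟩
        exact hconv γ (γ + δ) hmem hγpos.le (le_add_of_nonneg_right hδ)
      · rintro γ δ hγ hδ ⟨hpos, hnotH⟩
        rcases Classical.em (γ ∈ H) with hγH | hγH
        · right
          have hδH : δ ∉ H := fun h => hnotH (hadd γ hγH δ h)
          rcases hδ.eq_or_lt with h | h
          · exfalso
            refine hnotH ?_
            rw [← h, add_zero]
            exact hγH
          · exact ⟨h, hδH⟩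
        · left
          rcases hγ.eq_or_lt with h | h
          · exact absurd (h ▸ h0) hγH
          · exact ⟨h, hγH⟩
    · ext γ
      simp only [Set.mem_setOf_eq, not_and, not_not]
      constructor
      · rintro ⟨h1, h2⟩
        rcases lt_trichotomy γ 0 with h | h | h
        · have := h2 (by simpa using h)
          have := hneg _ this
          simpa using this
        · exact h ▸ h0
        · exact h1 h
      · intro hγH
        exact ⟨fun _ => hγH, fun _ => hneg _ hγH⟩
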